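/- The formula φ_sim := νX. ((νY. (⋀_{p∈P} (p(x) ⇔ p(y))) ∧ ⋀_{a∈Λ} [a]_x ⟨a⟩_y Y) ∧ {(x,y)←(y,x)}X) characterizes simulation equivalence: for every finite LTS L over finite sets Λ of labels and P of propositions and every first-order valuation v, v ∈ ⟦φ_sim⟧_L if and only if v(x) and v(y) are simulation equivalent, i.e. there exist simulations R, R' with (v(x),v(y))∈R and (v(y),v(x))∈R'. -/

import Mathlib

/-- A labeled transition system over edge labels `Λ` and atomic propositions `P`. -/
structure LTS (Λ P : Type) where
  S : Type
  s0 : S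
  Tr : S → Λ → S → Prop
  rho : S → Set P

/-- Formulas of the higher-dimensional modal μ-calculus Lμω. -/
inductive Formula (Λ P V V2 : Type) : Type
  | prop : P → V → Formula Λ P V V2
  | svar : V2 → Formula Λ P V V2
  | neg : Formula Λ P V V2 → Formula Λ P V V2
  | and : Formula Λ P V V2 → Formula Λ P V V2 → Formula Λ P V V2
  | dia : Λ → V → Formula Λ P V V2 → Formula Λ P V V2
  | mu : V2 → Formula Λ P V V2 → Formula Λ P V V2
  | repl : (V → V) → Formula Λ P V V2 → Formula Λ P V V2

variable {Λ P V V2 : Type}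

/-- Semantics of Lμω : a set of first-order valuations. -/
def sem [DecidableEq V] [DecidableEq V2] (L : LTS Λ P) :
    Formula Λ P V V2 → (V2 → Set (V → L.S)) → Set (V → L.S)
  | .prop p x, _ => {v | p ∈ L.rho (v x)}
  | .svar X, 𝒱 => 𝒱 X
  | .neg φ, 𝒱 => (sem L φ 𝒱)ᶜ
  | .and φ ψ, 𝒱 => sem L φ 𝒱 ∩ sem L ψ 𝒱
  | .dia a x φ, 𝒱 => {v | ∃ s, L.Tr (v x) a s ∧ Function.update v x s ∈ sem L φ 𝒱}
  | .mu X φ, 𝒱 => ⋂₀ {Q | sem L φ (Function.update 𝒱 X Q) ⊆ Q}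
  | .repl κ φ, 𝒱 => {v | (fun z => v (κ z)) ∈ sem L φ 𝒱}

/-- Derived operator: disjunction. -/
def Formula.or (φ ψ : Formula Λ P V V2) : Formula Λ P V V2 := .neg (.and (.neg φ) (.neg ψ))

/-- Derived operator: box modality. -/
def Formula.box (a : Λ) (x : V) (φ : Formula Λ P V V2) : Formula Λ P V V2 :=
  .neg (.dia a x (.neg φ))

/-- Replace every occurrence of the second-order variable `X` by `¬X`. -/
def Formula.substNeg [DecidableEq V2] (X : V2) : Formula Λ P V V2 → Formula Λ P V V2
  | .prop p x => .prop p x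
  | .svar Y => if Y = X then .neg (.svar Y) else .svar Y
  | .neg φ => .neg (φ.substNeg X)
  | .and φ ψ => .and (φ.substNeg X) (ψ.substNeg X)
  | .dia a x φ => .dia a x (φ.substNeg X)
  | .mu Y φ => .mu Y (φ.substNeg X)
  | .repl κ φ => .repl κ (φ.substNeg X)

/-- Derived operator: greatest fixed point, `νX.φ := ¬μX.¬φ[X:=¬X]`. -/
def Formula.nu [DecidableEq V2] (X : V2) (φ : Formula Λ P V V2) : Formula Λ P V V2 :=
  .neg (.mu X (.neg (φ.substNeg X)))

/-- Falsity, definable as `μX.X`. -/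
def Formula.bot (X : V2) : Formula Λ P V V2 := .mu X (.svar X)

/-- Truth. -/
def Formula.top (X : V2) : Formula Λ P V V2 := .neg (.bot X)

/-- Finite conjunction (`X` is a dummy second-order variable for the empty case). -/
def bigAnd (X : V2) (l : List (Formula Λ P V V2)) : Formula Λ P V V2 := l.foldr .and (.top X)

/-- Finite disjunction. -/
def bigOr (X : V2) (l : List (Formula Λ P V V2)) : Formula Λ P V V2 := l.foldr .or (.bot X)

/-- Derived operator: implication. -/
def Formula.imp (φ ψ : Formula Λ P V V2) : Formula Λ P V V2 := .neg (.and φ (.neg ψ))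

/-- Derived operator: bi-implication. -/
def Formula.iff (φ ψ : Formula Λ P V V2) : Formula Λ P V V2 := .and (φ.imp ψ) (ψ.imp φ)

/-- A simulation on an LTS: related states satisfy the same propositions and every move
of the first state can be matched by the second. -/
def IsSimulation {Λ P : Type} (L : LTS Λ P) (R : L.S → L.S → Prop) : Prop :=
  ∀ s₁ s₂, R s₁ s₂ →
    (∀ p, p ∈ L.rho s₁ ↔ p ∈ L.rho s₂) ∧
    ∀ a s₁', L.Tr s₁ a s₁' → ∃ s₂', L.Tr s₂ a s₂' ∧ R s₁' s₂'

/-- A bisimulation is a symmetric simulation (`R = R⁻¹`). -/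
def IsBisimulation {Λ P : Type} (L : LTS Λ P) (R : L.S → L.S → Prop) : Prop :=
  IsSimulation L R ∧ ∀ s t, R s t ↔ R t s

/-- Two states are bisimilar if some bisimulation contains them. -/
def Bisimilar {Λ P : Type} (L : LTS Λ P) (s t : L.S) : Prop :=
  ∃ R, IsBisimulation L R ∧ R s t

/-- Two states are simulation equivalent if each simulates the other (via possibly
different simulations). -/
def SimulationEquivalent {Λ P : Type} (L : LTS Λ P) (s t : L.S) : Prop :=
  ∃ R R', IsSimulation L R ∧ IsSimulation L R' ∧ R s t ∧ R' t s

/-- The variable replacement swapping `x` and `y`. -/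
def swapRepl {V : Type} [DecidableEq V] (x y : V) : V → V :=
  fun z => if z = x then y else if z = y then x else z

/-- The formula
`νX. ((νY. ⋀_{p∈P} (p(x) ⇔ p(y)) ∧ ⋀_{a∈Λ} [a]_x⟨a⟩_y Y) ∧ {(x,y)←(y,x)}X)`
(second-order variables are natural numbers; `X` is `0`, `Y` is `1`, `2` is a dummy). -/
noncomputable def phiSim (Λ P : Type) [Fintype Λ] [Fintype P] {V : Type} [DecidableEq V]
    (x y : V) : Formula Λ P V ℕ :=
  Formula.nu 0 (.and
    (Formula.nu 1 (.and
      (bigAnd 2 ((Finset.univ : Finset P).toList.map fun p =>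
        Formula.iff (.prop p x) (.prop p y)))
      (bigAnd 2 ((Finset.univ : Finset Λ).toList.map fun a =>
        Formula.box a x (.dia a y (.svar 1))))))
    (.repl (swapRepl x y) (.svar 0)))

/-- `X` is not bound by any `μ` in the formula. -/
def NoBound [DecidableEq V2] (X : V2) : Formula Λ P V V2 → Prop
  | .prop _ _ => True
  | .svar _ => True
  | .neg φ => NoBound X φ
  | .and φ ψ => NoBound X φ ∧ NoBound X ψ
  | .dia _ _ φ => NoBound X φ
  | .mu Y φ => Y ≠ X ∧ NoBound X φ
  | .repl _ φ => NoBound X φ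

lemma noBound_substNeg [DecidableEq V2] {X Y : V2} {φ : Formula Λ P V V2}
    (h : NoBound X φ) : NoBound X (φ.substNeg Y) := by
  induction φ with
  | prop p x => exact h
  | svar Z => by_cases hZ : Z = Y <;> simp [Formula.substNeg, hZ, NoBound]
  | neg φ ih => exact ih h
  | and φ ψ ih1 ih2 => exact ⟨ih1 h.1, ih2 h.2⟩
  | dia a x φ ih => exact ih h
  | mu Z φ ih => exact ⟨h.1, ih h.2⟩
  | repl κ φ ih => exact ih h

lemma sem_substNeg [DecidableEq V] [DecidableEq V2] (L : LTS Λ P) {X : V2}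
    {φ : Formula Λ P V V2} (h : NoBound X φ) (𝒱 : V2 → Set (V → L.S)) :
    sem L (φ.substNeg X) 𝒱 = sem L φ (Function.update 𝒱 X (𝒱 X)ᶜ) := by
  induction φ generalizing 𝒱 with
  | prop p x => rfl
  | svar Z =>
      by_cases hZ : Z = X
      · subst hZ; simp [Formula.substNeg, sem]
      · simp [Formula.substNeg, hZ, sem, Function.update_of_ne hZ]
  | neg φ ih => simp [Formula.substNeg, sem, ih h]
  | and φ ψ ih1 ih2 => simp [Formula.substNeg, sem, ih1 h.1, ih2 h.2]
  | dia a x φ ih => simp [Formula.substNeg, sem, ih h]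
  | mu Z φ ih =>
      have hZX : Z ≠ X := h.1
      simp only [Formula.substNeg, sem]
      have key : ∀ Q, sem L (Formula.substNeg X φ) (Function.update 𝒱 Z Q)
          = sem L φ (Function.update (Function.update 𝒱 X (𝒱 X)ᶜ) Z Q) := by
        intro Q
        rw [ih h.2, Function.update_of_ne hZX.symm, Function.update_comm hZX]
      simp only [key]
  | repl κ φ ih => simp [Formula.substNeg, sem, ih h]

lemma sem_nu [DecidableEq V] [DecidableEq V2] (L : LTS Λ P) {X : V2}
    {φ : Formula Λ P V V2} (h : NoBound X φ) (𝒱 : V2 → Set (V → L.S)) :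
    sem L (Formula.nu X φ) 𝒱 =
      ⋃₀ {Q | Q ⊆ sem L φ (Function.update 𝒱 X Q)} := by
  simp only [Formula.nu, sem]
  ext v
  simp only [Set.mem_compl_iff, Set.mem_sInter, Set.mem_setOf_eq, not_forall,
    Set.mem_sUnion]
  constructor
  · rintro ⟨Q, hQ, hv⟩
    rw [sem_substNeg L h, Function.update_self, Function.update_idem] at hQ
    refine ⟨Qᶜ, ?_, hv⟩
    intro w hw
    by_contra hc
    exact hw (hQ (by simpa using hc))
  · rintro ⟨Q, hQ, hv⟩
    refine ⟨Qᶜ, ?_, fun h' => h' hv⟩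
    rw [sem_substNeg L h, Function.update_self, Function.update_idem, compl_compl]
    intro w hw hwQ
    exact hw (hQ hwQ)

lemma sem_top [DecidableEq V] [DecidableEq V2] (L : LTS Λ P) (X : V2)
    (𝒱 : V2 → Set (V → L.S)) : sem L (Formula.top X) 𝒱 = Set.univ := by
  simp only [Formula.top, Formula.bot, sem]
  rw [Set.compl_univ_iff]
  refine Set.eq_empty_of_subset_empty (Set.sInter_subset_of_mem ?_)
  simp [Function.update_self]

lemma sem_bigAnd [DecidableEq V] [DecidableEq V2] (L : LTS Λ P) (X : V2)
    (l : List (Formula Λ P V V2)) (𝒱 : V2 → Set (V → L.S)) (v : V → L.S) :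
    v ∈ sem L (bigAnd X l) 𝒱 ↔ ∀ φ ∈ l, v ∈ sem L φ 𝒱 := by
  induction l with
  | nil => simp [bigAnd, sem_top]
  | cons φ l ih =>
      simp only [bigAnd, List.foldr_cons, List.mem_cons] at *
      constructor
      · rintro ⟨h1, h2⟩ ψ hψ
        rcases hψ with rfl | hψ
        · exact h1
        · exact ih.1 h2 ψ hψ
      · intro h
        exact ⟨h φ (Or.inl rfl), ih.2 fun ψ hψ => h ψ (Or.inr hψ)⟩

lemma noBound_bigAnd [DecidableEq V2] {X Y : V2} (hYX : Y ≠ X)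
    {l : List (Formula Λ P V V2)} (h : ∀ φ ∈ l, NoBound X φ) :
    NoBound X (bigAnd Y l) := by
  induction l with
  | nil => exact ⟨hYX, trivial⟩
  | cons φ l ih =>
      exact ⟨h φ (List.mem_cons_self), ih fun ψ hψ => h ψ (List.mem_cons_of_mem _ hψ)⟩

lemma mem_iff_props [DecidableEq V] [DecidableEq V2] (L : LTS Λ P) (p : P) (x y : V)
    (𝒱 : V2 → Set (V → L.S)) (v : V → L.S) :
    v ∈ sem L (Formula.iff (.prop p x) (.prop p y)) 𝒱 ↔
      (p ∈ L.rho (v x) ↔ p ∈ L.rho (v y)) := by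
  simp only [Formula.iff, Formula.imp, sem, Set.mem_inter_iff, Set.mem_compl_iff,
    Set.mem_setOf_eq]
  tauto

lemma mem_box_dia [DecidableEq V] [DecidableEq V2] (L : LTS Λ P) (a : Λ) (x y : V)
    (hxy : x ≠ y) (X : V2) (𝒱 : V2 → Set (V → L.S)) (v : V → L.S) :
    v ∈ sem L (Formula.box a x (.dia a y (.svar X))) 𝒱 ↔
      ∀ s, L.Tr (v x) a s → ∃ t, L.Tr (v y) a t ∧
        Function.update (Function.update v x s) y t ∈ 𝒱 X := by
  simp only [Formula.box, sem, Set.mem_compl_iff, Set.mem_setOf_eq, not_exists, not_and,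
    not_not, Function.update_of_ne (Ne.symm hxy)]
  push_neg
  rfl

section Inner

variable {Λ P V : Type} [Fintype Λ] [Fintype P] [DecidableEq V]

/-- The body of the inner `ν`. -/
noncomputable def innerBody (Λ P : Type) [Fintype Λ] [Fintype P] {V : Type}
    [DecidableEq V] (x y : V) : Formula Λ P V ℕ :=
  .and
    (bigAnd 2 ((Finset.univ : Finset P).toList.map fun p =>
      Formula.iff (.prop p x) (.prop p y)))
    (bigAnd 2 ((Finset.univ : Finset Λ).toList.map fun a =>
      Formula.box a x (.dia a y (.svar 1))))

lemma noBound_innerBody (x y : V) {X : ℕ} (hX : X ≠ 2) :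
    NoBound X (innerBody Λ P x y) := by
  refine ⟨noBound_bigAnd (Ne.symm hX) ?_, noBound_bigAnd (Ne.symm hX) ?_⟩ <;>
    · intro φ hφ
      simp only [List.mem_map] at hφ
      obtain ⟨p, -, rfl⟩ := hφ
      simp [Formula.iff, Formula.imp, Formula.box, NoBound]

lemma mem_innerBody (L : LTS Λ P) (x y : V) (hxy : x ≠ y)
    (𝒱 : ℕ → Set (V → L.S)) (v : V → L.S) :
    v ∈ sem L (innerBody Λ P x y) 𝒱 ↔
      ((∀ p : P, p ∈ L.rho (v x) ↔ p ∈ L.rho (v y)) ∧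
        ∀ a s, L.Tr (v x) a s → ∃ t, L.Tr (v y) a t ∧
          Function.update (Function.update v x s) y t ∈ 𝒱 1) := by
  have heq : sem L (innerBody Λ P x y) 𝒱 =
      sem L (bigAnd 2 ((Finset.univ : Finset P).toList.map fun p =>
        Formula.iff (.prop p x) (.prop p y))) 𝒱 ∩
      sem L (bigAnd 2 ((Finset.univ : Finset Λ).toList.map fun a =>
        Formula.box a x (.dia a y (.svar 1)))) 𝒱 := rfl
  rw [heq]
  simp only [Set.mem_inter_iff, sem_bigAnd, List.forall_mem_map,
    Finset.mem_toList, Finset.mem_univ, forall_true_left, mem_iff_props,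
    mem_box_dia L _ x y hxy]

lemma sem_innerNu (L : LTS Λ P) (x y : V) (hxy : x ≠ y) (𝒱 : ℕ → Set (V → L.S)) :
    sem L (Formula.nu 1 (innerBody Λ P x y)) 𝒱 =
      {v | ∃ R, IsSimulation L R ∧ R (v x) (v y)} := by
  rw [sem_nu L (noBound_innerBody x y (by norm_num))]
  ext v
  simp only [Set.mem_sUnion, Set.mem_setOf_eq]
  constructor
  · rintro ⟨Q, hQ, hv⟩
    refine ⟨fun s t => ∃ w ∈ Q, w x = s ∧ w y = t, ?_, ⟨v, hv, rfl, rfl⟩⟩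
    rintro s t ⟨w, hw, rfl, rfl⟩
    have hmem := (mem_innerBody L x y hxy _ w).1 (hQ hw)
    refine ⟨hmem.1, ?_⟩
    intro a s' hTr
    obtain ⟨t', ht', hmem'⟩ := hmem.2 a s' hTr
    rw [Function.update_self] at hmem'
    refine ⟨t', ht', Function.update (Function.update w x s') y t', hmem', ?_, ?_⟩
    · rw [Function.update_of_ne hxy, Function.update_self]
    · rw [Function.update_self]
  · rintro ⟨R, hR, hRv⟩
    refine ⟨{w | R (w x) (w y)}, ?_, hRv⟩
    intro w hw
    rw [mem_innerBody L x y hxy]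
    obtain ⟨hprops, hmoves⟩ := hR _ _ hw
    refine ⟨hprops, ?_⟩
    intro a s hTr
    obtain ⟨t, ht, hRst⟩ := hmoves a s hTr
    refine ⟨t, ht, ?_⟩
    rw [Function.update_self, Set.mem_setOf_eq, Function.update_self,
      Function.update_of_ne hxy, Function.update_self]
    exact hRst

end Inner

/-- the formula `phiSim` characterizes simulation equivalence: over any
finite LTS (with finitely many labels and propositions), a valuation `v` satisfies it
iff the states `v x` and `v y` are simulation equivalent. -/
theorem phiSim_characterizes_simulation_equivalence {Λ P V : Type} [Fintype Λ] [Fintype P]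
    [DecidableEq V] (x y : V) (hxy : x ≠ y) (L : LTS Λ P) [Fintype L.S]
    (v : V → L.S) :
    v ∈ sem L (phiSim Λ P x y) (fun _ => ∅) ↔ SimulationEquivalent L (v x) (v y) := by
  have hnb : NoBound 0 (Formula.and (Formula.nu 1 (innerBody Λ P x y))
      (Formula.repl (swapRepl x y) (Formula.svar 0))) :=
    ⟨⟨one_ne_zero, noBound_substNeg (noBound_innerBody x y (by norm_num))⟩, trivial⟩
  have hphi : phiSim Λ P x y = Formula.nu 0 (Formula.and
      (Formula.nu 1 (innerBody Λ P x y))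
      (Formula.repl (swapRepl x y) (Formula.svar 0))) := rfl
  rw [hphi, sem_nu L hnb]
  have hbody : ∀ (W : Set (V → L.S)) (w : V → L.S),
      w ∈ sem L (Formula.and (Formula.nu 1 (innerBody Λ P x y))
          (Formula.repl (swapRepl x y) (Formula.svar 0)))
        (Function.update (fun _ => (∅ : Set (V → L.S))) 0 W) ↔
      ((∃ R, IsSimulation L R ∧ R (w x) (w y)) ∧
        (fun z => w (swapRepl x y z)) ∈ W) := by
    intro W w
    have heq : sem L (Formula.and (Formula.nu 1 (innerBody Λ P x y))
          (Formula.repl (swapRepl x y) (Formula.svar 0)))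
          (Function.update (fun _ => (∅ : Set (V → L.S))) 0 W) =
        sem L (Formula.nu 1 (innerBody Λ P x y))
          (Function.update (fun _ => (∅ : Set (V → L.S))) 0 W) ∩
        {w | (fun z => w (swapRepl x y z)) ∈
          (Function.update (fun _ => (∅ : Set (V → L.S))) 0 W) 0} := rfl
    rw [heq, sem_innerNu L x y hxy]
    simp [Function.update_self]
  simp only [Set.mem_sUnion, Set.mem_setOf_eq]
  constructor
  · rintro ⟨W, hW, hv⟩
    obtain ⟨⟨R, hR, hRv⟩, hswap⟩ := (hbody W v).1 (hW hv)
    obtain ⟨⟨R', hR', hR'v⟩, -⟩ := (hbody W _).1 (hW hswap)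
    refine ⟨R, R', hR, hR', hRv, ?_⟩
    simpa [swapRepl, hxy, hxy.symm] using hR'v
  · rintro ⟨R, R', hR, hR', h1, h2⟩
    refine ⟨{w | (∃ S, IsSimulation L S ∧ S (w x) (w y)) ∧
        (∃ S, IsSimulation L S ∧ S (w y) (w x))}, ?_,
      ⟨⟨R, hR, h1⟩, ⟨R', hR', h2⟩⟩⟩
    intro w hw
    rw [hbody]
    refine ⟨hw.1, ?_⟩
    simp only [Set.mem_setOf_eq]
    constructor
    · simpa [swapRepl, hxy, hxy.symm] using hw.2
    · simpa [swapRepl, hxy, hxy.symm] using hw.1
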